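/- If (k_t, p_t)_{t≥0} and (k'_t, p'_t)_{t≥0} are two bubbleless equilibria with the same initial capital and the same dividends, then k_t = k'_t and p_t = p'_t for all t. Moreover, if (k_t, p_t) is a bubbleless equilibrium and (k'_t, p'_t) is any equilibrium with the same initial capital and dividends, then p_0 ≤ p'_0. -/

import Mathlib

open Filter Topology Set

noncomputable section

/-- Standing assumptions on the production function `f` with derivative `f'` and
second derivative `f''`: `f : (0,∞) → (0,∞)` is twice continuously differentiable,
`f' > 0`, `f'' < 0`, `f'(k) → ∞` as `k → 0+`, and `lim_{k→∞} f'(k) < G`. -/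
def ProdAssump (G : ℝ) (f f' f'' : ℝ → ℝ) : Prop :=
  0 < G ∧
  (∀ k > (0:ℝ), 0 < f k) ∧
  (∀ k > (0:ℝ), HasDerivAt f (f' k) k) ∧
  (∀ k > (0:ℝ), HasDerivAt f' (f'' k) k) ∧
  ContinuousOn f'' (Ioi 0) ∧
  (∀ k > (0:ℝ), 0 < f' k) ∧
  (∀ k > (0:ℝ), f'' k < 0) ∧
  Tendsto f' (nhdsWithin 0 (Ioi 0)) atTop ∧
  (∃ L < G, Tendsto f' atTop (nhds L))

/-- Standing assumptions on the savings function: continuous, `0 < s(w,R) < w`,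
strictly increasing in `w`, nondecreasing in `R`. -/
def SavAssump (s : ℝ → ℝ → ℝ) : Prop :=
  ContinuousOn (fun wR : ℝ × ℝ => s wR.1 wR.2) (Ioi 0 ×ˢ Ioi 0) ∧
  (∀ w > (0:ℝ), ∀ R > (0:ℝ), 0 < s w R ∧ s w R < w) ∧
  (∀ R > (0:ℝ), StrictMonoOn (fun w => s w R) (Ioi 0)) ∧
  (∀ w > (0:ℝ), MonotoneOn (fun R => s w R) (Ioi 0))

/-- The savings function arises from a continuous, quasi-concave, strictly increasing
utility `U` on `(0,∞)²`: `s w R` is the unique maximizer of `σ ↦ U (w - σ) (R σ)`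
over `(0, w)`. -/
def SavFromUtility (s : ℝ → ℝ → ℝ) : Prop :=
  ∃ U : ℝ → ℝ → ℝ,
    ContinuousOn (fun c : ℝ × ℝ => U c.1 c.2) (Ioi 0 ×ˢ Ioi 0) ∧
    QuasiconcaveOn ℝ (Ioi 0 ×ˢ Ioi 0) (fun c : ℝ × ℝ => U c.1 c.2) ∧
    (∀ c c' : ℝ × ℝ, c ∈ Ioi (0:ℝ) ×ˢ Ioi (0:ℝ) → c' ∈ Ioi (0:ℝ) ×ˢ Ioi (0:ℝ) →
      c.1 ≤ c'.1 → c.2 ≤ c'.2 → c ≠ c' → U c.1 c.2 < U c'.1 c'.2) ∧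
    (∀ w > (0:ℝ), ∀ R > (0:ℝ), s w R ∈ Ioo 0 w ∧
      ∀ σ ∈ Ioo (0:ℝ) w, σ ≠ s w R → U (w - σ) (R * σ) < U (w - s w R) (R * s w R))

/-- An equilibrium: sequences `k, p` with `k t > 0`, `p t ≥ 0`, `k 0 = k₀`,
the capital accumulation equation and the no-arbitrage price equation. -/
def IsEquilibrium (G : ℝ) (f f' : ℝ → ℝ) (s : ℝ → ℝ → ℝ) (k0 : ℝ) (d : ℕ → ℝ)
    (k p : ℕ → ℝ) : Prop :=
  (∀ t, 0 < k t) ∧ (∀ t, 0 ≤ p t) ∧ k 0 = k0 ∧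
  (∀ t, G * k (t + 1) + p t = s (f (k t) - k t * f' (k t)) (f' (k (t + 1)))) ∧
  (∀ t, p (t + 1) = f' (k (t + 1)) / G * p t - d (t + 1))

/-- Arrow–Debreu date-0 price `q_t = 1/(R_1 ⋯ R_t)` where `R_t = f'(k_t)`. -/
def qseq (f' : ℝ → ℝ) (k : ℕ → ℝ) (t : ℕ) : ℝ :=
  (∏ i ∈ Finset.range t, f' (k (i + 1)))⁻¹

/-- Undetrended dividend `D_t = G^t d_t`. -/
def Dseq (G : ℝ) (d : ℕ → ℝ) (t : ℕ) : ℝ := G ^ t * d t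

/-- Detrended fundamental value `v_t = G^{-t} q_t^{-1} ∑_{s>t} q_s D_s`. -/
def fundval (G : ℝ) (f' : ℝ → ℝ) (k : ℕ → ℝ) (d : ℕ → ℝ) (t : ℕ) : ℝ :=
  (G ^ t)⁻¹ * (qseq f' k t)⁻¹ * ∑' n : ℕ, qseq f' k (t + 1 + n) * Dseq G d (t + 1 + n)

/-- Detrended bubble component `b_t = p_t - v_t`. -/
def bubble (G : ℝ) (f' : ℝ → ℝ) (k p : ℕ → ℝ) (d : ℕ → ℝ) (t : ℕ) : ℝ :=
  p t - fundval G f' k d t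

/-- An equilibrium is bubbleless if `b_t = 0` for all `t`. -/
def Bubbleless (G : ℝ) (f' : ℝ → ℝ) (k p : ℕ → ℝ) (d : ℕ → ℝ) : Prop :=
  ∀ t, bubble G f' k p d t = 0

/-- An equilibrium is asymptotically bubbly if `liminf_{t→∞} b_t > 0`. -/
def AsympBubbly (G : ℝ) (f' : ℝ → ℝ) (k p : ℕ → ℝ) (d : ℕ → ℝ) : Prop :=
  0 < atTop.liminf (bubble G f' k p d)

/-- Long-run dividend growth rate `G_d = limsup_{t→∞} D_t^{1/t}` (as an extended real). -/
def GdGrowth (G : ℝ) (d : ℕ → ℝ) : EReal :=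
  atTop.limsup (fun t : ℕ => ((Dseq G d t ^ ((t : ℝ)⁻¹) : ℝ) : EReal))

/-- `x` solves the equation `G x + p = s(f(k) - k f'(k), f'(x))` with `x > 0`;
when the solution exists it is unique and denoted `g(k,p)`. -/
def IsGsol (G : ℝ) (f f' : ℝ → ℝ) (s : ℝ → ℝ → ℝ) (k p x : ℝ) : Prop :=
  0 < x ∧ G * x + p = s (f k - k * f' k) (f' x)

/-- Set of positive steady states: `𝒦 = {k > 0 : g(k,0) = k}`. -/
def Ksteady (G : ℝ) (f f' : ℝ → ℝ) (s : ℝ → ℝ → ℝ) : Set ℝ :=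
  {k : ℝ | 0 < k ∧ IsGsol G f f' s k 0 k}

/-- The equilibrium set `𝒫₀` of initial prices. -/
def P0set (G : ℝ) (f f' : ℝ → ℝ) (s : ℝ → ℝ → ℝ) (k0 : ℝ) (d : ℕ → ℝ) : Set ℝ :=
  {p0 : ℝ | ∃ k p : ℕ → ℝ, IsEquilibrium G f f' s k0 d k p ∧ p 0 = p0}

section Aux

variable {G : ℝ} {f f' f'' : ℝ → ℝ} {s : ℝ → ℝ → ℝ}

lemma aux_anti (hf : ProdAssump G f f' f'') : StrictAntiOn f' (Ioi 0) := by
  apply strictAntiOn_of_deriv_neg (convex_Ioi 0)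
  · exact fun x hx => ((hf.2.2.2.1 x hx).continuousAt).continuousWithinAt
  · intro x hx
    rw [interior_Ioi] at hx
    rw [(hf.2.2.2.1 x hx).deriv]
    exact hf.2.2.2.2.2.2.1 x hx

lemma aux_mvt (hf : ProdAssump G f f' f'') {a b : ℝ} (ha : 0 < a) (hab : a < b) :
    f a + f' b * (b - a) ≤ f b := by
  have hcont : ContinuousOn f (Icc a b) := fun x hx =>
    ((hf.2.2.1 x (lt_of_lt_of_le ha hx.1)).continuousAt).continuousWithinAt
  obtain ⟨c, hc1, hc2⟩ := exists_hasDerivAt_eq_slope f f' hab hcont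
    (fun x hx => hf.2.2.1 x (lt_of_lt_of_le ha hx.1.le))
  have h1 : f' b < f' c := aux_anti hf (lt_trans ha hc1.1) (lt_trans ha (lt_trans hc1.1 hc1.2)) hc1.2
  have hba : 0 < b - a := by linarith
  have : f' b ≤ (f b - f a) / (b - a) := by rw [← hc2]; linarith
  rw [le_div_iff₀ hba] at this
  linarith

lemma aux_wpos (hf : ProdAssump G f f' f'') {k : ℝ} (hk : 0 < k) :
    0 < f k - k * f' k := by
  have hfpos := hf.2.1
  have hf'pos := hf.2.2.2.2.2.1
  -- first: nonnegativity for every positive point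
  have wge : ∀ b > (0:ℝ), 0 ≤ f b - b * f' b := by
    intro b hb
    by_contra hcon
    push_neg at hcon
    set c := f b - b * f' b with hc
    have hfb := hf'pos b hb
    set ε := min (b/2) (-c / (2 * f' b)) with hε
    have hε0 : 0 < ε := lt_min (by linarith) (div_pos (by linarith) (by linarith))
    have hεb : ε < b := lt_of_le_of_lt (min_le_left _ _) (by linarith)
    have h1 : f ε + f' b * (b - ε) ≤ f b := aux_mvt hf hε0 hεb
    have h2 : 0 < f ε := hfpos ε hε0
    have h3 : f' b * ε ≤ -c / 2 := by
      have := min_le_right (b/2) (-c / (2 * f' b))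
      calc f' b * ε ≤ f' b * (-c / (2 * f' b)) := by
            apply mul_le_mul_of_nonneg_left (by rw [hε] at *; exact this) hfb.le
        _ = -c / 2 := by field_simp
    -- c > - f' b * ε ≥ c/2 with c < 0 : contradiction
    have : c > - (f' b * ε) := by
      have : f b - b * f' b ≥ f ε - f' b * ε := by nlinarith
      nlinarith
    linarith
  have h1 : f (k/2) + f' k * (k - k/2) ≤ f k := aux_mvt hf (by linarith) (by linarith)
  have h2 : f' k < f' (k/2) := aux_anti hf (by simp; linarith) (by simpa using hk) (by linarith)
  have h3 : 0 ≤ f (k/2) - (k/2) * f' (k/2) := wge (k/2) (by linarith)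
  nlinarith

lemma aux_wmono (hf : ProdAssump G f f' f'') :
    StrictMonoOn (fun x => f x - x * f' x) (Ioi 0) := by
  apply strictMonoOn_of_deriv_pos (convex_Ioi 0)
  · intro x hx
    exact (((hf.2.2.1 x hx).sub ((hasDerivAt_id x).mul (hf.2.2.2.1 x hx))).continuousAt).continuousWithinAt
  · intro x hx
    rw [interior_Ioi] at hx
    have hD : HasDerivAt (fun x => f x - x * f' x) (f' x - (1 * f' x + x * f'' x)) x :=
      (hf.2.2.1 x hx).sub ((hasDerivAt_id x).mul (hf.2.2.2.1 x hx))
    rw [hD.deriv]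
    have h'' := hf.2.2.2.2.2.2.1 x hx
    have hx' : (0:ℝ) < x := hx
    nlinarith [mul_pos hx' (neg_pos.2 h'')]

lemma aux_comp (hf : ProdAssump G f f' f'') (hs : SavAssump s)
    {w1 w2 p1 p2 x1 x2 : ℝ} (hw1 : 0 < w1) (hw12 : w1 ≤ w2)
    (hp2 : 0 ≤ p2) (hp : p2 ≤ p1) (hx1 : 0 < x1) (hx2 : 0 < x2)
    (e1 : G * x1 + p1 = s w1 (f' x1)) (e2 : G * x2 + p2 = s w2 (f' x2)) :
    x1 ≤ x2 := by
  by_contra hcon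
  push_neg at hcon
  have hG := hf.1
  have hf'pos := hf.2.2.2.2.2.1
  have hR1 : 0 < f' x1 := hf'pos x1 hx1
  have hR2 : 0 < f' x2 := hf'pos x2 hx2
  have hRlt : f' x1 < f' x2 := aux_anti hf hx2 hx1 hcon
  have hmono : s w1 (f' x1) ≤ s w1 (f' x2) :=
    hs.2.2.2 w1 hw1 hR1 hR2 hRlt.le
  have hw : s w1 (f' x2) ≤ s w2 (f' x2) := by
    rcases eq_or_lt_of_le hw12 with h | h
    · rw [h]
    · exact (hs.2.2.1 (f' x2) hR2 hw1 (lt_trans hw1 h) h).le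
  -- G x1 + p1 ≤ G x2 + p2 ≤ G x2 + p1
  have : G * x1 + p1 ≤ G * x2 + p2 := by rw [e1, e2]; linarith
  nlinarith

lemma aux_compseq (hf : ProdAssump G f f' f'') (hs : SavAssump s)
    {k0 : ℝ} {d : ℕ → ℝ} {k p k' p' : ℕ → ℝ}
    (heq : IsEquilibrium G f f' s k0 d k p) (heq' : IsEquilibrium G f f' s k0 d k' p')
    (hp0 : p' 0 ≤ p 0) : ∀ t, k t ≤ k' t ∧ p' t ≤ p t := by
  obtain ⟨hk, hp, hk0, hcap, hpr⟩ := heq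
  obtain ⟨hk', hp', hk0', hcap', hpr'⟩ := heq'
  have hG := hf.1
  intro t
  induction t with
  | zero => exact ⟨by rw [hk0, hk0'], hp0⟩
  | succ t ih =>
    obtain ⟨ihk, ihp⟩ := ih
    have hw1 : 0 < f (k t) - k t * f' (k t) := aux_wpos hf (hk t)
    have hw12 : f (k t) - k t * f' (k t) ≤ f (k' t) - k' t * f' (k' t) := by
      rcases eq_or_lt_of_le ihk with h | h
      · rw [h]
      · exact ((aux_wmono hf) (hk t) (hk' t) h).le
    have hkk : k (t+1) ≤ k' (t+1) :=
      aux_comp hf hs hw1 hw12 (hp' t) ihp (hk (t+1)) (hk' (t+1)) (hcap t) (hcap' t)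
    refine ⟨hkk, ?_⟩
    rw [hpr t, hpr' t]
    have hR : f' (k' (t+1)) ≤ f' (k (t+1)) := by
      rcases eq_or_lt_of_le hkk with h | h
      · rw [h]
      · exact (aux_anti hf (hk (t+1)) (hk' (t+1)) h).le
    have hRpos : 0 < f' (k' (t+1)) := hf.2.2.2.2.2.1 _ (hk' (t+1))
    have : f' (k' (t+1)) * p' t ≤ f' (k (t+1)) * p t :=
      mul_le_mul hR ihp (hp' t) (by linarith)
    have h2 : f' (k' (t+1)) * p' t / G ≤ f' (k (t+1)) * p t / G :=
      div_le_div_of_nonneg_right this hG.le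
    calc f' (k' (t+1)) / G * p' t - d (t+1)
        = f' (k' (t+1)) * p' t / G - d (t+1) := by ring
      _ ≤ f' (k (t+1)) * p t / G - d (t+1) := by linarith
      _ = f' (k (t+1)) / G * p t - d (t+1) := by ring

lemma aux_qpos (hf : ProdAssump G f f' f'') {k : ℕ → ℝ} (hk : ∀ t, 0 < k t) (t : ℕ) :
    0 < qseq f' k t := by
  unfold qseq
  apply inv_pos.2
  exact Finset.prod_pos fun i _ => hf.2.2.2.2.2.1 _ (hk (i+1))

lemma aux_partial (hf : ProdAssump G f f' f'') (hs : SavAssump s)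
    {k0 : ℝ} {d : ℕ → ℝ} {k p : ℕ → ℝ}
    (heq : IsEquilibrium G f f' s k0 d k p) (T : ℕ) :
    ∑ n ∈ Finset.range T, qseq f' k (1+n) * Dseq G d (1+n)
      = p 0 - qseq f' k T * (G ^ T * p T) := by
  have hG := hf.1
  have hGne : G ≠ 0 := ne_of_gt hG
  induction T with
  | zero => simp [qseq]
  | succ T ih =>
    rw [Finset.sum_range_succ, ih]
    have hrec : qseq f' k (T+1) * (G ^ (T+1) * p (T+1))
        = qseq f' k T * (G ^ T * p T) - qseq f' k (T+1) * Dseq G d (T+1) := by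
      have hpr := heq.2.2.2.2 T
      set R := f' (k (T+1)) with hR
      have hRpos : 0 < R := hf.2.2.2.2.2.1 _ (heq.1 (T+1))
      have hRne : R ≠ 0 := ne_of_gt hRpos
      have hP : (0:ℝ) < ∏ i ∈ Finset.range T, f' (k (i + 1)) :=
        Finset.prod_pos fun i _ => hf.2.2.2.2.2.1 _ (heq.1 (i+1))
      have hPne := ne_of_gt hP
      have hq1 : qseq f' k (T+1) = (∏ i ∈ Finset.range T, f' (k (i + 1)))⁻¹ * R⁻¹ := by
        unfold qseq
        rw [Finset.prod_range_succ, mul_inv]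
      unfold qseq Dseq
      rw [hpr] at *
      rw [Finset.prod_range_succ]
      field_simp
      rw [← hR]
      linear_combination (G ^ (T + 1) * p T) * mul_inv_cancel₀ hRne
    have h1T : (1 + T) = (T + 1) := by omega
    rw [h1T, hrec]
    ring

lemma aux_summable (hf : ProdAssump G f f' f'') (hs : SavAssump s)
    {k0 : ℝ} {d : ℕ → ℝ} {k p : ℕ → ℝ} (hd : ∀ t ≥ 1, 0 ≤ d t)
    (heq : IsEquilibrium G f f' s k0 d k p) :
    Summable (fun n => qseq f' k (1+n) * Dseq G d (1+n)) ∧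
    ∑' n : ℕ, qseq f' k (1+n) * Dseq G d (1+n) ≤ p 0 := by
  have hG := hf.1
  have hnn : ∀ n : ℕ, 0 ≤ qseq f' k (1+n) * Dseq G d (1+n) := by
    intro n
    apply mul_nonneg (aux_qpos hf heq.1 _).le
    unfold Dseq
    exact mul_nonneg (by positivity) (hd (1+n) (by omega))
  have hbd : ∀ T : ℕ, ∑ n ∈ Finset.range T, qseq f' k (1+n) * Dseq G d (1+n) ≤ p 0 := by
    intro T
    rw [aux_partial hf hs heq T]
    have : 0 ≤ qseq f' k T * (G ^ T * p T) :=
      mul_nonneg (aux_qpos hf heq.1 T).le (mul_nonneg (by positivity) (heq.2.1 T))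
    linarith
  have hsum := summable_of_sum_range_le hnn hbd
  exact ⟨hsum, Summable.tsum_le_of_sum_range_le hsum hbd⟩

lemma aux_blval (hf : ProdAssump G f f' f'')
    {d : ℕ → ℝ} {k p : ℕ → ℝ} (hbl : Bubbleless G f' k p d) :
    p 0 = ∑' n : ℕ, qseq f' k (1+n) * Dseq G d (1+n) := by
  have h := hbl 0
  unfold bubble fundval at h
  simp only [pow_zero, inv_one, one_mul] at h
  have hq0 : qseq f' k 0 = 1 := by simp [qseq]
  rw [hq0, inv_one, one_mul] at h
  have : ∀ n : ℕ, (0 + 1 + n) = (1 + n) := by omega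
  simp only [this] at h
  linarith

lemma aux_min (hf : ProdAssump G f f' f'') (hs : SavAssump s)
    {k0 : ℝ} {d : ℕ → ℝ} (hd : ∀ t ≥ 1, 0 ≤ d t) {k p k' p' : ℕ → ℝ}
    (heq : IsEquilibrium G f f' s k0 d k p) (hbl : Bubbleless G f' k p d)
    (heq' : IsEquilibrium G f f' s k0 d k' p') : p 0 ≤ p' 0 := by
  have hG := hf.1
  by_contra hcon
  push_neg at hcon
  have hcomp := aux_compseq hf hs heq heq' hcon.le
  have hterm : ∀ n : ℕ, qseq f' k (1+n) * Dseq G d (1+n)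
      ≤ qseq f' k' (1+n) * Dseq G d (1+n) := by
    intro n
    have hD : 0 ≤ Dseq G d (1+n) := by
      unfold Dseq
      exact mul_nonneg (by positivity) (hd (1+n) (by omega))
    apply mul_le_mul_of_nonneg_right _ hD
    unfold qseq
    apply inv_anti₀
    · exact Finset.prod_pos fun i _ => hf.2.2.2.2.2.1 _ (heq'.1 (i+1))
    · apply Finset.prod_le_prod
      · intro i _
        exact (hf.2.2.2.2.2.1 _ (heq'.1 (i+1))).le
      · intro i _
        rcases eq_or_lt_of_le (hcomp (i+1)).1 with h | h
        · rw [h]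
        · exact (aux_anti hf (heq.1 (i+1)) (heq'.1 (i+1)) h).le
  have hS := aux_summable hf hs hd heq
  have hS' := aux_summable hf hs hd heq'
  have h1 : p 0 = ∑' n : ℕ, qseq f' k (1+n) * Dseq G d (1+n) := aux_blval hf hbl
  have h2 := Summable.tsum_le_tsum hterm hS.1 hS'.1
  linarith [hS'.2]

end Aux

/-- Corollary `cor:unique_bubbleless`: there is at most one
bubbleless equilibrium, and it has the smallest initial price among all equilibria. -/
theorem stmt6 (G : ℝ) (f f' f'' : ℝ → ℝ) (s : ℝ → ℝ → ℝ)
    (hf : ProdAssump G f f' f'') (hs : SavAssump s)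
    (k0 : ℝ) (hk0 : 0 < k0) (d : ℕ → ℝ) (hd : ∀ t ≥ 1, 0 ≤ d t)
    (k p : ℕ → ℝ)
    (heq : IsEquilibrium G f f' s k0 d k p)
    (hbl : Bubbleless G f' k p d) :
    (∀ k' p' : ℕ → ℝ, IsEquilibrium G f f' s k0 d k' p' → Bubbleless G f' k' p' d →
      (∀ t, k t = k' t) ∧ (∀ t, p t = p' t)) ∧
    (∀ k' p' : ℕ → ℝ, IsEquilibrium G f f' s k0 d k' p' → p 0 ≤ p' 0) := by
  constructor
  · intro k' p' heq' hbl'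
    have h1 : p 0 ≤ p' 0 := aux_min hf hs hd heq hbl heq'
    have h2 : p' 0 ≤ p 0 := aux_min hf hs hd heq' hbl' heq
    have hp0 : p 0 = p' 0 := le_antisymm h1 h2
    have key : ∀ t, k t = k' t ∧ p t = p' t := by
      intro t
      induction t with
      | zero => exact ⟨heq.2.2.1.trans heq'.2.2.1.symm, hp0⟩
      | succ t ih =>
        obtain ⟨ihk, ihp⟩ := ih
        have hw1 : 0 < f (k t) - k t * f' (k t) := aux_wpos hf (heq.1 t)
        have e1 := heq.2.2.2.1 t
        have e2 := heq'.2.2.2.1 t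
        rw [← ihk, ← ihp] at e2
        have hle : k (t+1) ≤ k' (t+1) :=
          aux_comp hf hs hw1 le_rfl (heq.2.1 t) le_rfl (heq.1 _) (heq'.1 _) e1 e2
        have hge : k' (t+1) ≤ k (t+1) :=
          aux_comp hf hs hw1 le_rfl (heq.2.1 t) le_rfl (heq'.1 _) (heq.1 _) e2 e1
        have hkk : k (t+1) = k' (t+1) := le_antisymm hle hge
        refine ⟨hkk, ?_⟩
        rw [heq.2.2.2.2 t, heq'.2.2.2.2 t, hkk, ihp]
    exact ⟨fun t => (key t).1, fun t => (key t).2⟩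
  · intro k' p' heq'
    exact aux_min hf hs hd heq hbl heq'

end
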